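/- (Motzkin's transposition theorem.) Let A ∈ ℝ^{r×n} and B ∈ ℝ^{s×n} be real matrices and let α ∈ ℝ^r and β ∈ ℝ^s be column vectors. Then there exists a vector x ∈ ℝⁿ with Ax ≥ α (componentwise) and Bx > β (componentwise) if and only if for all row vectors y ∈ ℝ^r and z ∈ ℝ^s with y ≥ 0 and z ≥ 0: (i) if yA + zB = 0 then yα + zβ ≤ 0, and (ii) if yA + zB = 0 and z ≠ 0 then yα + zβ < 0. -/

import Mathlib

open Matrix Finset

open scoped InnerProductSpace

/-- The set of nonnegative combinations of a finite family of vectors is closed. -/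
lemma coneSet_closed {N : ℕ} : ∀ (m : ℕ) (v : Fin m → EuclideanSpace ℝ (Fin N)),
    IsClosed {x : EuclideanSpace ℝ (Fin N) |
      ∃ c : Fin m → ℝ, (∀ i, 0 ≤ c i) ∧ x = ∑ i, c i • v i} := by
  intro m
  induction m with
  | zero =>
    intro v
    have : {x : EuclideanSpace ℝ (Fin N) |
        ∃ c : Fin 0 → ℝ, (∀ i, 0 ≤ c i) ∧ x = ∑ i, c i • v i}
        = {(0 : EuclideanSpace ℝ (Fin N))} := by
      ext x
      constructor
      · rintro ⟨c, hc, rfl⟩; simp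
      · rintro rfl
        exact ⟨fun i => i.elim0, fun i => i.elim0, by simp⟩
    rw [this]; exact isClosed_singleton
  | succ m ih =>
    intro v
    by_cases hli : LinearIndependent ℝ v
    · -- image of the nonnegative orthant under a closed embedding
      let φ : (Fin (m+1) → ℝ) →ₗ[ℝ] EuclideanSpace ℝ (Fin N) :=
        { toFun := fun c => ∑ i, c i • v i
          map_add' := by
            intro a b
            simp [add_smul, Finset.sum_add_distrib]
          map_smul' := by
            intro t a
            simp [smul_smul, Finset.smul_sum] }
      have hker : LinearMap.ker φ = ⊥ := by
        rw [LinearMap.ker_eq_bot']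
        intro c hc
        funext i
        exact Fintype.linearIndependent_iff.mp hli c hc i
      have hce := LinearMap.isClosedEmbedding_of_injective hker
      have himg : {x : EuclideanSpace ℝ (Fin N) |
          ∃ c : Fin (m+1) → ℝ, (∀ i, 0 ≤ c i) ∧ x = ∑ i, c i • v i}
          = φ '' {c : Fin (m+1) → ℝ | ∀ i, 0 ≤ c i} := by
        ext x
        constructor
        · rintro ⟨c, hc, rfl⟩; exact ⟨c, hc, rfl⟩
        · rintro ⟨c, hc, rfl⟩; exact ⟨c, hc, rfl⟩
      rw [himg]
      refine hce.isClosedMap _ ?_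
      have : {c : Fin (m+1) → ℝ | ∀ i, 0 ≤ c i} = ⋂ i, {c | 0 ≤ c i} := by ext; simp
      rw [this]
      exact isClosed_iInter fun i => isClosed_le continuous_const (continuous_apply i)
    · -- dependent case : Carathéodory reduction
      obtain ⟨g₀, hg₀, j₀, hj₀⟩ := Fintype.not_linearIndependent_iff.mp hli
      -- get a relation with a positive coefficient
      obtain ⟨g, hg, jp, hjp⟩ :
          ∃ g : Fin (m+1) → ℝ, (∑ i, g i • v i = 0) ∧ ∃ j, 0 < g j := by
        rcases lt_trichotomy (g₀ j₀) 0 with h | h | h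
        · exact ⟨-g₀, by simp [hg₀], j₀, by simpa using h⟩
        · exact absurd h hj₀
        · exact ⟨g₀, hg₀, j₀, h⟩
      have key : {x : EuclideanSpace ℝ (Fin N) |
            ∃ c : Fin (m+1) → ℝ, (∀ i, 0 ≤ c i) ∧ x = ∑ i, c i • v i}
          = ⋃ j : Fin (m+1), {x : EuclideanSpace ℝ (Fin N) |
            ∃ c : Fin m → ℝ, (∀ i, 0 ≤ c i) ∧ x = ∑ i, c i • v (j.succAbove i)} := by
        ext x
        constructor
        · rintro ⟨c, hc, rfl⟩
          obtain ⟨j, hjmem, hjmin⟩ := Finset.exists_min_image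
            (Finset.univ.filter fun i => 0 < g i) (fun i => c i / g i)
            ⟨jp, by simp [hjp]⟩
          simp only [Finset.mem_filter, Finset.mem_univ, true_and] at hjmem hjmin
          set t := c j / g j with ht
          have ht0 : 0 ≤ t := div_nonneg (hc j) hjmem.le
          have hc' : ∀ i, 0 ≤ c i - t * g i := by
            intro i
            rcases le_or_gt (g i) 0 with h | h
            · have h1 : t * g i ≤ 0 := mul_nonpos_of_nonneg_of_nonpos ht0 h
              linarith [hc i]
            · have h1 : t ≤ c i / g i := hjmin i (by simp [h])
              have h2 : t * g i ≤ c i := by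
                rw [← div_mul_cancel₀ (c i) h.ne']
                exact mul_le_mul_of_nonneg_right h1 h.le
              linarith
          have hcj : c j - t * g j = 0 := by
            rw [ht, div_mul_cancel₀ _ (ne_of_gt hjmem)]
            ring
          have hsum : ∑ i, c i • v i = ∑ i, (c i - t * g i) • v i := by
            have : ∑ i, (t * g i) • v i = t • ∑ i, g i • v i := by
              rw [Finset.smul_sum]
              simp [smul_smul]
            simp only [sub_smul, Finset.sum_sub_distrib, this, hg, smul_zero, sub_zero]
          refine Set.mem_iUnion.mpr ⟨j, fun i => c (j.succAbove i) - t * g (j.succAbove i),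
            fun i => hc' _, ?_⟩
          rw [hsum, Fin.sum_univ_succAbove (fun i => (c i - t * g i) • v i) j, hcj,
            zero_smul, zero_add]
        · rintro hx
          obtain ⟨j, c, hc, rfl⟩ := Set.mem_iUnion.mp hx
          refine ⟨(Fin.insertNth j (0:ℝ) c : Fin (m+1) → ℝ), ?_, ?_⟩
          · intro i
            refine Fin.succAboveCases j ?_ ?_ i
            · simp
            · intro k
              simpa using hc k
          · rw [Fin.sum_univ_succAbove
              (fun i => (Fin.insertNth j (0:ℝ) c : Fin (m+1) → ℝ) i • v i) j]
            simp
      rw [key]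
      exact isClosed_iUnion_of_finite fun j => ih _

/-- Farkas' lemma in Euclidean space. -/
lemma farkas_inner {N : ℕ} {ι : Type} [Fintype ι] (v : ι → EuclideanSpace ℝ (Fin N))
    (d : EuclideanSpace ℝ (Fin N))
    (h : ∀ x : EuclideanSpace ℝ (Fin N), (∀ i, 0 ≤ ⟪v i, x⟫_ℝ) → 0 ≤ ⟪d, x⟫_ℝ) :
    ∃ c : ι → ℝ, (∀ i, 0 ≤ c i) ∧ d = ∑ i, c i • v i := by
  classical
  let e := Fintype.equivFin ι
  set m := Fintype.card ι
  set v' : Fin m → EuclideanSpace ℝ (Fin N) := fun j => v (e.symm j) with hv'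
  let K : ConvexCone ℝ (EuclideanSpace ℝ (Fin N)) :=
    { carrier := {x | ∃ c : Fin m → ℝ, (∀ i, 0 ≤ c i) ∧ x = ∑ i, c i • v' i}
      smul_mem' := by
        rintro t ht x ⟨c, hc, rfl⟩
        exact ⟨fun i => t * c i, fun i => mul_nonneg ht.le (hc i), by
          rw [Finset.smul_sum]; simp [smul_smul]⟩
      add_mem' := by
        rintro x ⟨c, hc, rfl⟩ y ⟨c2, hc2, rfl⟩
        exact ⟨c + c2, fun i => add_nonneg (hc i) (hc2 i), by
          simp [add_smul, Finset.sum_add_distrib]⟩ }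
  have hdK : d ∈ K := by
    by_contra hd
    let P : ProperCone ℝ (EuclideanSpace ℝ (Fin N)) :=
      { carrier := (K : Set (EuclideanSpace ℝ (Fin N)))
        zero_mem' := ⟨fun i => (0:ℝ), fun i => le_refl 0, by simp⟩
        add_mem' := fun hx hy => K.add_mem hx hy
        smul_mem' := by
          rintro ⟨t, ht⟩ x ⟨c, hc, rfl⟩
          exact ⟨fun i => t * c i, fun i => mul_nonneg ht (hc i), by
            rw [Nonneg.mk_smul, Finset.smul_sum]; simp [smul_smul]⟩
        isClosed' := coneSet_closed m v' }
    obtain ⟨y, hy, hyd⟩ := P.hyperplane_separation' (x₀ := d) hd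
    have hvy : ∀ i : ι, 0 ≤ ⟪v i, y⟫_ℝ := by
      intro i
      have hmem : v i ∈ K := by
        refine ⟨fun j => if j = e i then 1 else 0, fun j => by positivity, ?_⟩
        simp [ite_smul, hv']
      exact hy _ hmem
    have := h y hvy
    rw [real_inner_comm] at hyd
    rw [real_inner_comm] at this
    linarith
  obtain ⟨c', hc', hd⟩ := hdK
  refine ⟨fun i => c' (e i), fun i => hc' _, ?_⟩
  rw [hd, ← Equiv.sum_comp e (fun j => c' j • v' j)]
  simp [hv']

/-- Farkas' lemma, dot-product form. -/
lemma farkas_dot {N : ℕ} {ι : Type} [Fintype ι] (v : ι → (Fin N → ℝ)) (d : Fin N → ℝ)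
    (h : ∀ x : Fin N → ℝ, (∀ i, 0 ≤ v i ⬝ᵥ x) → 0 ≤ d ⬝ᵥ x) :
    ∃ c : ι → ℝ, (∀ i, 0 ≤ c i) ∧ d = ∑ i, c i • v i := by
  let L : (Fin N → ℝ) ≃ₗ[ℝ] EuclideanSpace ℝ (Fin N) :=
    (WithLp.linearEquiv 2 ℝ (Fin N → ℝ)).symm
  have hinner : ∀ (u : Fin N → ℝ) (x : EuclideanSpace ℝ (Fin N)),
      ⟪L u, x⟫_ℝ = u ⬝ᵥ (WithLp.equiv 2 (Fin N → ℝ) x) := by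
    intro u x
    simp [PiLp.inner_apply, RCLike.inner_apply, dotProduct, L, mul_comm]
  have hhyp : ∀ x : EuclideanSpace ℝ (Fin N),
      (∀ i, 0 ≤ ⟪L (v i), x⟫_ℝ) → 0 ≤ ⟪L d, x⟫_ℝ := by
    intro x hx
    rw [hinner]
    refine h _ ?_
    intro i
    have := hx i
    rwa [hinner] at this
  obtain ⟨c, hc, hd⟩ := farkas_inner (fun i => L (v i)) (L d) hhyp
  refine ⟨c, hc, ?_⟩
  have heq : L d = L (∑ i, c i • v i) := by
    rw [hd, map_sum]; simp
  exact L.injective heq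

/-- Homogeneous Motzkin transposition theorem. -/
lemma motzkin_homog {N : ℕ} {ι κ : Type} [Fintype ι] [Fintype κ]
    (a : ι → (Fin N → ℝ)) (b : κ → (Fin N → ℝ))
    (h : ∀ (y : ι → ℝ) (z : κ → ℝ), (∀ i, 0 ≤ y i) → (∀ j, 0 ≤ z j) →
      (∑ i, y i • a i) + (∑ j, z j • b j) = 0 → z = 0) :
    ∃ x : Fin N → ℝ, (∀ i, 0 ≤ a i ⬝ᵥ x) ∧ (∀ j, 0 < b j ⬝ᵥ x) := by
  classical
  have hx : ∀ j : κ, ∃ x : Fin N → ℝ,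
      (∀ i, 0 ≤ a i ⬝ᵥ x) ∧ (∀ k, 0 ≤ b k ⬝ᵥ x) ∧ 0 < b j ⬝ᵥ x := by
    intro j
    by_contra hcon
    push_neg at hcon
    have hfar : ∀ x : Fin N → ℝ, (∀ i : ι ⊕ κ, 0 ≤ Sum.elim a b i ⬝ᵥ x) →
        0 ≤ (-(b j)) ⬝ᵥ x := by
      intro x hall
      have h1 : ∀ i, 0 ≤ a i ⬝ᵥ x := fun i => hall (Sum.inl i)
      have h2 : ∀ k, 0 ≤ b k ⬝ᵥ x := fun k => hall (Sum.inr k)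
      have := hcon x h1 h2
      rw [neg_dotProduct]
      linarith
    obtain ⟨c, hc, hd⟩ := farkas_dot (Sum.elim a b) (-(b j)) hfar
    rw [Fintype.sum_sum_type] at hd
    set y : ι → ℝ := fun i => c (Sum.inl i) with hy
    set z : κ → ℝ := fun k => c (Sum.inr k) + if k = j then 1 else 0 with hz
    have hzsum : ∑ k, z k • b k = (∑ k, c (Sum.inr k) • b k) + b j := by
      simp only [hz, add_smul, Finset.sum_add_distrib, ite_smul, one_smul, zero_smul]
      simp
    have hzero : (∑ i, y i • a i) + (∑ k, z k • b k) = 0 := by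
      rw [hzsum]
      have : -(b j) = (∑ i, y i • a i) + ∑ k, c (Sum.inr k) • b k := by
        simpa using hd
      rw [← add_assoc, ← this]
      simp
    have hzz := h y z (fun i => hc _) (fun k => by
      show (0:ℝ) ≤ c (Sum.inr k) + if k = j then 1 else 0
      have := hc (Sum.inr k)
      positivity) hzero
    have : z j = 0 := congrFun hzz j
    rw [hz] at this
    simp at this
    have := hc (Sum.inr j)
    linarith
  have hds : ∀ (u : Fin N → ℝ) (f : κ → Fin N → ℝ),
      u ⬝ᵥ (∑ j, f j) = ∑ j, u ⬝ᵥ f j := by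
    intro u f
    simp only [dotProduct, Finset.sum_apply, Finset.mul_sum]
    rw [Finset.sum_comm]
  choose xs hxs using hx
  refine ⟨∑ j, xs j, ?_, ?_⟩
  · intro i
    rw [hds]
    exact Finset.sum_nonneg fun j _ => (hxs j).1 i
  · intro j
    rw [hds]
    refine Finset.sum_pos' (fun k _ => (hxs k).2.1 j) ⟨j, Finset.mem_univ j, (hxs j).2.2⟩

/-- **Motzkin's transposition theorem.** There exists `x` with `A *ᵥ x ≥ α`
(componentwise) and `B *ᵥ x > β` (componentwise) iff for all nonnegative row
vectors `y, z`: (i) `y A + z B = 0 → y⬝α + z⬝β ≤ 0`, and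
(ii) `y A + z B = 0 ∧ z ≠ 0 → y⬝α + z⬝β < 0`. -/
theorem motzkin_transposition (r s n : ℕ)
    (A : Matrix (Fin r) (Fin n) ℝ) (B : Matrix (Fin s) (Fin n) ℝ)
    (α : Fin r → ℝ) (β : Fin s → ℝ) :
    (∃ x : Fin n → ℝ, (∀ i, α i ≤ A.mulVec x i) ∧ (∀ j, β j < B.mulVec x j)) ↔
      (∀ y : Fin r → ℝ, ∀ z : Fin s → ℝ, (∀ i, 0 ≤ y i) → (∀ j, 0 ≤ z j) →
        ((Matrix.vecMul y A + Matrix.vecMul z B = 0 → y ⬝ᵥ α + z ⬝ᵥ β ≤ 0) ∧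
         (Matrix.vecMul y A + Matrix.vecMul z B = 0 → z ≠ 0 → y ⬝ᵥ α + z ⬝ᵥ β < 0))) := by
  classical
  constructor
  · rintro ⟨x, hA, hB⟩ y z hy hz
    have hkey : ∀ (_ : Matrix.vecMul y A + Matrix.vecMul z B = 0),
        y ⬝ᵥ (A *ᵥ x) + z ⬝ᵥ (B *ᵥ x) = 0 := by
      intro hsum
      rw [Matrix.dotProduct_mulVec, Matrix.dotProduct_mulVec, ← add_dotProduct,
        hsum, zero_dotProduct]
    have hyA : y ⬝ᵥ α ≤ y ⬝ᵥ (A *ᵥ x) := by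
      simp only [dotProduct]
      exact Finset.sum_le_sum fun i _ => mul_le_mul_of_nonneg_left (hA i) (hy i)
    have hzB : z ⬝ᵥ β ≤ z ⬝ᵥ (B *ᵥ x) := by
      simp only [dotProduct]
      exact Finset.sum_le_sum fun j _ => mul_le_mul_of_nonneg_left (hB j).le (hz j)
    constructor
    · intro hsum
      have := hkey hsum
      linarith
    · intro hsum hzne
      obtain ⟨j, hj⟩ := Function.ne_iff.mp hzne
      have hjpos : 0 < z j := lt_of_le_of_ne (hz j) (Ne.symm hj)
      have hzBlt : z ⬝ᵥ β < z ⬝ᵥ (B *ᵥ x) := by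
        simp only [dotProduct]
        refine Finset.sum_lt_sum
          (fun k _ => mul_le_mul_of_nonneg_left (hB k).le (hz k))
          ⟨j, Finset.mem_univ j, ?_⟩
        exact mul_lt_mul_of_pos_left (hB j) hjpos
      have := hkey hsum
      linarith
  · intro h
    -- homogenize
    set a : Fin r → (Fin (n+1) → ℝ) := fun i => Fin.cons (-(α i)) (A i) with ha
    set b : (Fin s ⊕ Unit) → (Fin (n+1) → ℝ) :=
      Sum.elim (fun j => Fin.cons (-(β j)) (B j)) (fun _ => Fin.cons 1 0) with hb
    have hdual : ∀ (y : Fin r → ℝ) (z : (Fin s ⊕ Unit) → ℝ),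
        (∀ i, 0 ≤ y i) → (∀ j, 0 ≤ z j) →
        (∑ i, y i • a i) + (∑ j, z j • b j) = 0 → z = 0 := by
      intro y z hy hz hsum
      set z' : Fin s → ℝ := fun j => z (Sum.inl j) with hz'
      set w : ℝ := z (Sum.inr ()) with hw
      have h0 := congrFun hsum 0
      have hcoord0 : (∑ i, y i * (-(α i))) + ((∑ j, z' j * (-(β j))) + w * 1) = 0 := by
        simpa [ha, hb, Finset.sum_apply, Fintype.sum_sum_type, hz', hw] using h0
      have hweq : w = y ⬝ᵥ α + z' ⬝ᵥ β := by
        simp only [dotProduct]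
        have e1 : ∑ i, y i * (-(α i)) = -∑ i, y i * α i := by
          simp [mul_comm]
        have e2 : ∑ j, z' j * (-(β j)) = -∑ j, z' j * β j := by
          simp [mul_comm]
        rw [e1, e2] at hcoord0
        linarith
      have hvm : Matrix.vecMul y A + Matrix.vecMul z' B = 0 := by
        funext k
        have hk := congrFun hsum k.succ
        simp only [ha, hb, Finset.sum_apply, Fintype.sum_sum_type, Pi.smul_apply,
          smul_eq_mul, Fin.cons_succ, Pi.add_apply, Pi.zero_apply, Sum.elim_inl,
          Sum.elim_inr, Finset.univ_unique, Finset.sum_singleton, mul_zero] at hk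
        simp only [Pi.add_apply, Pi.zero_apply, Matrix.vecMul, dotProduct]
        simp only [hz']
        linarith [hk]
      obtain ⟨h1, h2⟩ := h y z' hy (fun j => hz (Sum.inl j))
      have hwle : y ⬝ᵥ α + z' ⬝ᵥ β ≤ 0 := h1 hvm
      have hw0 : w = 0 := le_antisymm (hweq ▸ hwle) (hz (Sum.inr ()))
      have hz'0 : z' = 0 := by
        by_contra hne
        have := h2 hvm hne
        rw [← hweq, hw0] at this
        exact lt_irrefl 0 this
      funext jk
      rcases jk with j | ⟨⟩
      · exact congrFun hz'0 j
      · exact hw0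
    obtain ⟨xh, hA', hB'⟩ := motzkin_homog a b hdual
    set t := xh 0 with htdef
    have hcompute : ∀ (c : ℝ) (u : Fin n → ℝ),
        (Fin.cons c u : Fin (n+1) → ℝ) ⬝ᵥ xh = c * t + ∑ k, u k * xh k.succ := by
      intro c u
      simp [dotProduct, Fin.sum_univ_succ, htdef]
    have ht : 0 < t := by
      have := hB' (Sum.inr ())
      rw [hb] at this
      simp only [Sum.elim_inr] at this
      rw [hcompute] at this
      simpa using this
    set x : Fin n → ℝ := fun k => xh k.succ / t with hx
    have hmv : ∀ (u : Fin n → ℝ), u ⬝ᵥ x = (∑ k, u k * xh k.succ) / t := by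
      intro u
      simp [hx, dotProduct, Finset.sum_div, mul_div_assoc]
    refine ⟨x, ?_, ?_⟩
    · intro i
      have h0 := hA' i
      rw [ha] at h0
      rw [hcompute] at h0
      have h1 : α i * t ≤ ∑ k, A i k * xh k.succ := by linarith
      show α i ≤ (A i) ⬝ᵥ x
      rw [hmv]
      exact (le_div_iff₀ ht).mpr h1
    · intro j
      have h0 := hB' (Sum.inl j)
      rw [hb] at h0
      simp only [Sum.elim_inl] at h0
      rw [hcompute] at h0
      have h1 : β j * t < ∑ k, B j k * xh k.succ := by linarith
      show β j < (B j) ⬝ᵥ x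
      rw [hmv]
      exact (lt_div_iff₀ ht).mpr h1
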